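/- Fix n ≥ 1 and strictly interlacing real numbers z_i^{(j)} for j = 1,…,n, i = 1,…,j (i.e. z_{1}^{(j+1)} > z_1^{(j)} > z_2^{(j+1)} > z_2^{(j)} > … > z_j^{(j)} > z_{j+1}^{(j+1)} for each j). For each N, set y_i^{(j)}(N) = ⌊(z_i^{(j)}√N + N)/2⌋ and define P_N = [∏_{i=0}^{n−1}(N−i)! / ∏_{i=1}^{n} y_i^{(n)}(N)! (N − y_i^{(n)}(N))!] · Δ(y^{(n)}(N)) · 2^{−N −(N−n)(n−1) − α(y^{(1)}(N),…,y^{(n−1)}(N))}, where α(y^{(1)},…,y^{(n−1)}) = ∑_{k=1}^{n−1} #{i : y_i^{(k)} = y_i^{(k+1)} or y_i^{(k)} = y_{i+1}^{(k+1)}}. Then lim_{N→∞} (N/4)^{n(n+1)/4} · P_N = (2π)^{−n/2} · ∏_{1≤i<j≤n}(z_i^{(n)} − z_j^{(n)}) · exp(−(1/2)∑_{i=1}^{n}(z_i^{(n)})^2), which is the joint density of the GUE* minor process (eigenvalues of the top-left j×j minors, j = 1,…,n, of a complex Hermitian matrix with measure proportional to e^{−Tr X²/2}). -/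

import Mathlib

open Finset

/-- The rescaled lattice points `y_i^{(j)}(N) = ⌊(z_i^{(j)} √N + N)/2⌋`. -/
noncomputable def aztecY (n : ℕ) (z : (j : Fin n) → Fin (j.1 + 1) → ℝ) (N : ℕ)
    (j : Fin n) (i : Fin (j.1 + 1)) : ℤ :=
  Int.floor ((z j i * Real.sqrt N + N) / 2)

/-- The adjacency count
`α(y^{(1)},…,y^{(n-1)}) = ∑_{k=1}^{n-1} #{i : y_i^{(k)} = y_i^{(k+1)} or y_i^{(k)} = y_{i+1}^{(k+1)}}`
for the lattice points `aztecY`. -/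
noncomputable def aztecAlphaY (n : ℕ) (z : (j : Fin n) → Fin (j.1 + 1) → ℝ)
    (N : ℕ) : ℕ :=
  ∑ j : Fin n, if h : j.1 + 1 < n then
    (univ.filter (fun i : Fin (j.1 + 1) =>
      aztecY n z N j i = aztecY n z N ⟨j.1 + 1, h⟩ i.castSucc ∨
      aztecY n z N j i = aztecY n z N ⟨j.1 + 1, h⟩ i.succ)).card
  else 0


section Stmt7AuxSec
open Filter Real Finset
namespace Stmt7Aux


lemma sqrtN_atTop : Tendsto (fun N : ℕ => Real.sqrt N) atTop atTop := by
  have h := (tendsto_rpow_atTop (by norm_num : (0:ℝ) < 1/2)).comp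
    (tendsto_natCast_atTop_atTop (R := ℝ))
  refine h.congr fun N => ?_
  exact (Real.sqrt_eq_rpow _).symm

lemma inv_sqrtN_zero : Tendsto (fun N : ℕ => (Real.sqrt N)⁻¹) atTop (nhds 0) :=
  sqrtN_atTop.inv_tendsto_atTop

lemma g_approx {a : ℝ} (ha : |a| ≤ 1/2) :
    |(1+a)*Real.log (1+a) + (1-a)*Real.log (1-a) - a^2| ≤ 7*a^4 := by
  have ha1 : |a| < 1 := ha.trans_lt (by norm_num)
  have ha1' : |(-a)| < 1 := by rwa [abs_neg]
  have hs : ∀ x : ℝ, (∑ i ∈ Finset.range 3, x ^ (i + 1) / (i + 1)) = x + x^2/2 + x^3/3 := by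
    intro x
    rw [Finset.sum_range_succ, Finset.sum_range_succ, Finset.sum_range_succ,
      Finset.sum_range_zero]
    norm_num
  have habs : |a|^(3+1)/(1-|a|) ≤ 2*a^4 := by
    have h4 : |a|^(3+1) = a^4 := by
      rw [(by norm_num : 3+1 = 4), ← abs_pow,
        abs_of_nonneg (by positivity : (0:ℝ) ≤ a^4)]
    rw [h4, div_le_iff₀ (by linarith [abs_nonneg a] : (0:ℝ) < 1 - |a|)]
    nlinarith [mul_le_mul_of_nonneg_left ha (by positivity : (0:ℝ) ≤ 2*a^4),
      pow_nonneg (abs_nonneg a) 4, sq_nonneg a]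
  have h1 := Real.abs_log_sub_add_sum_range_le ha1' 3
  have h2 := Real.abs_log_sub_add_sum_range_le ha1 3
  rw [hs, show (1:ℝ) - -a = 1 + a from by ring, abs_neg] at h1
  rw [hs] at h2
  have he1 : |Real.log (1+a) - (a - a^2/2 + a^3/3)| ≤ 2*a^4 := by
    have heq : Real.log (1+a) - (a - a^2/2 + a^3/3)
        = (-a + (-a)^2/2 + (-a)^3/3) + Real.log (1+a) := by ring
    rw [heq]; exact h1.trans habs
  have he2 : |Real.log (1-a) - (-a - a^2/2 - a^3/3)| ≤ 2*a^4 := by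
    have heq : Real.log (1-a) - (-a - a^2/2 - a^3/3)
        = (a + a^2/2 + a^3/3) + Real.log (1-a) := by ring
    rw [heq]; exact h2.trans habs
  have hgeq : (1+a)*Real.log (1+a) + (1-a)*Real.log (1-a) - a^2
      = (1+a)*(Real.log (1+a) - (a - a^2/2 + a^3/3))
        + (1-a)*(Real.log (1-a) - (-a - a^2/2 - a^3/3)) + (2/3)*a^4 := by ring
  rw [hgeq]
  have hb1 : |(1+a)*(Real.log (1+a) - (a - a^2/2 + a^3/3))| ≤ (3/2)*(2*a^4) := by
    rw [abs_mul]
    have h1a : |1+a| ≤ 3/2 := by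
      rw [abs_le] at ha ⊢; constructor <;> linarith [ha.1, ha.2]
    exact mul_le_mul h1a he1 (abs_nonneg _) (by norm_num)
  have hb2 : |(1-a)*(Real.log (1-a) - (-a - a^2/2 - a^3/3))| ≤ (3/2)*(2*a^4) := by
    rw [abs_mul]
    have h1a : |1-a| ≤ 3/2 := by
      rw [abs_le] at ha ⊢; constructor <;> linarith [ha.1, ha.2]
    exact mul_le_mul h1a he2 (abs_nonneg _) (by norm_num)
  calc |(1+a)*(Real.log (1+a) - (a - a^2/2 + a^3/3))
        + (1-a)*(Real.log (1-a) - (-a - a^2/2 - a^3/3)) + (2/3)*a^4|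
      ≤ |(1+a)*(Real.log (1+a) - (a - a^2/2 + a^3/3))
        + (1-a)*(Real.log (1-a) - (-a - a^2/2 - a^3/3))| + |(2/3)*a^4| := abs_add_le _ _
    _ ≤ (|(1+a)*(Real.log (1+a) - (a - a^2/2 + a^3/3))|
        + |(1-a)*(Real.log (1-a) - (-a - a^2/2 - a^3/3))|) + |(2/3)*a^4| := by
        gcongr; exact abs_add_le _ _
    _ ≤ ((3/2)*(2*a^4) + (3/2)*(2*a^4)) + (2/3)*a^4 := by
        have : |(2/3)*a^4| = (2/3)*a^4 := abs_of_nonneg (by positivity)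
        rw [this]; gcongr
    _ ≤ 7*a^4 := by nlinarith [pow_nonneg (abs_nonneg a) 4, sq_nonneg (a^2), sq_nonneg a]



lemma tendsto_floor_scaled (c : ℝ) :
    Tendsto (fun N : ℕ =>
      (2*((⌊(c*Real.sqrt N + N)/2⌋ : ℤ) : ℝ) - N)/Real.sqrt N) atTop (nhds c) := by
  have key : Tendsto (fun N : ℕ =>
      (2*((⌊(c*Real.sqrt N + N)/2⌋ : ℤ) : ℝ) - N)/Real.sqrt N - c) atTop (nhds 0) := by
    apply squeeze_zero_norm' (a := fun N : ℕ => 2*(Real.sqrt N)⁻¹)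
    · filter_upwards [eventually_ge_atTop 1] with N hN
      have hs : (0:ℝ) < Real.sqrt N := Real.sqrt_pos.mpr (by exact_mod_cast hN)
      set u := (c*Real.sqrt N + N)/2 with hu
      have h1 : ((⌊u⌋ : ℤ) : ℝ) ≤ u := Int.floor_le u
      have h2 : u < ((⌊u⌋ : ℤ) : ℝ) + 1 := Int.lt_floor_add_one u
      have heq : (2*((⌊u⌋ : ℤ) : ℝ) - N)/Real.sqrt N - c
          = (2*((⌊u⌋ : ℤ) : ℝ) - N - c*Real.sqrt N)/Real.sqrt N := by
        field_simp
      rw [heq, norm_div, Real.norm_eq_abs, Real.norm_eq_abs,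
        abs_of_pos hs, div_le_iff₀ hs]
      have : |2*((⌊u⌋ : ℤ) : ℝ) - N - c*Real.sqrt N| ≤ 2 := by
        rw [abs_le]; constructor <;> [nlinarith; nlinarith]
      calc |2*((⌊u⌋ : ℤ) : ℝ) - N - c*Real.sqrt N| ≤ 2 := this
        _ ≤ 2*(Real.sqrt N)⁻¹ * Real.sqrt N := by
            rw [mul_assoc, inv_mul_cancel₀ (ne_of_gt hs), mul_one]
    · simpa using inv_sqrtN_zero.const_mul 2
  have := key.add (tendsto_const_nhds (x := c))
  simpa using this

lemma tendsto_floor_diff_scaled (c d : ℝ) :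
    Tendsto (fun N : ℕ =>
      (((⌊(c*Real.sqrt N + N)/2⌋ : ℤ) : ℝ) - ((⌊(d*Real.sqrt N + N)/2⌋ : ℤ) : ℝ))
        * (2/Real.sqrt N)) atTop (nhds (c - d)) := by
  have h := (tendsto_floor_scaled c).sub (tendsto_floor_scaled d)
  refine h.congr' ?_
  filter_upwards [eventually_ge_atTop 1] with N hN
  have hs : (0:ℝ) < Real.sqrt N := Real.sqrt_pos.mpr (by exact_mod_cast hN)
  field_simp
  ring

lemma eventually_floor_lt {c d : ℝ} (h : c < d) :
    ∀ᶠ N : ℕ in atTop, (⌊(c*Real.sqrt N + N)/2⌋ : ℤ) < ⌊(d*Real.sqrt N + N)/2⌋ := by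
  have hs := sqrtN_atTop.eventually_ge_atTop (2/(d - c))
  filter_upwards [hs] with N hN
  have hdc : (0:ℝ) < d - c := by linarith
  have h2 : (c*Real.sqrt N + N)/2 + 1 ≤ (d*Real.sqrt N + N)/2 := by
    rw [div_le_iff₀ hdc] at hN
    nlinarith
  have h3 : (⌊(c*Real.sqrt N + N)/2⌋ : ℤ) + 1 ≤ ⌊(d*Real.sqrt N + N)/2⌋ := by
    apply Int.le_floor.mpr
    push_cast
    calc ((⌊(c*Real.sqrt N + N)/2⌋ : ℤ) : ℝ) + 1 ≤ (c*Real.sqrt N + N)/2 + 1 := by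
          linarith [Int.floor_le ((c*Real.sqrt N + N)/2)]
      _ ≤ (d*Real.sqrt N + N)/2 := h2
  omega

/-- y/N → 1/2 -/
lemma tendsto_half {y : ℕ → ℤ} {x : ℝ}
    (hx : Tendsto (fun N : ℕ => (2*((y N : ℤ) : ℝ) - N)/Real.sqrt N) atTop (nhds x)) :
    Tendsto (fun N : ℕ => ((y N : ℤ) : ℝ)/N) atTop (nhds (1/2)) := by
  have h0 : Tendsto (fun N : ℕ =>
      ((2*((y N : ℤ) : ℝ) - N)/Real.sqrt N) * ((2*Real.sqrt N)⁻¹) + 1/2) atTop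
      (nhds (x * 0 + 1/2)) := by
    apply Tendsto.add _ tendsto_const_nhds
    apply hx.mul
    have : Tendsto (fun N : ℕ => 2*Real.sqrt N) atTop atTop :=
      sqrtN_atTop.const_mul_atTop (by norm_num)
    exact this.inv_tendsto_atTop
  rw [mul_zero, zero_add] at h0
  refine h0.congr' ?_
  filter_upwards [eventually_ge_atTop 1] with N hN
  have hs : (0:ℝ) < Real.sqrt N := Real.sqrt_pos.mpr (by exact_mod_cast hN)
  have hN0 : (0:ℝ) < (N:ℝ) := by exact_mod_cast hN
  have hss : Real.sqrt N * Real.sqrt N = (N:ℝ) := Real.mul_self_sqrt (by positivity)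
  have hs2 : Real.sqrt N*(2*Real.sqrt N) = 2*(N:ℝ) := by
    rw [mul_left_comm, hss]
  have e1 : (2*((y N : ℤ) : ℝ) - N)/Real.sqrt N * (2*Real.sqrt N)⁻¹
      = (2*((y N : ℤ) : ℝ) - N) / (2*(N:ℝ)) := by
    rw [← div_eq_mul_inv, div_div, hs2]
  rw [e1]
  field_simp
  ring

lemma eventually_y_bounds {y : ℕ → ℤ} {x : ℝ}
    (hx : Tendsto (fun N : ℕ => (2*((y N : ℤ) : ℝ) - N)/Real.sqrt N) atTop (nhds x)) :
    ∀ᶠ N : ℕ in atTop, 1 ≤ y N ∧ y N ≤ (N:ℤ) - 1 ∧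
      (N:ℝ)/4 ≤ ((y N : ℤ) : ℝ) ∧ ((y N : ℤ) : ℝ) ≤ 3*(N:ℝ)/4 := by
  have hhalf := tendsto_half hx
  have h1 : ∀ᶠ N : ℕ in atTop, ((y N : ℤ) : ℝ)/N < 3/4 :=
    hhalf.eventually_lt_const (by norm_num)
  have h2 : ∀ᶠ N : ℕ in atTop, (1:ℝ)/4 < ((y N : ℤ) : ℝ)/N :=
    hhalf.eventually_const_lt (by norm_num)
  filter_upwards [h1, h2, eventually_ge_atTop 8] with N hl hg hN8
  have hN0 : (0:ℝ) < (N:ℝ) := by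
    have : (8:ℝ) ≤ (N:ℝ) := by exact_mod_cast hN8
    linarith
  have hN8' : (8:ℝ) ≤ (N:ℝ) := by exact_mod_cast hN8
  rw [div_lt_iff₀ hN0] at hl
  rw [lt_div_iff₀ hN0] at hg
  have hy1 : 1 ≤ y N := by
    have : (1:ℝ) ≤ ((y N : ℤ) : ℝ) := by nlinarith
    exact_mod_cast this
  have hy2 : y N ≤ (N:ℤ) - 1 := by
    have : ((y N : ℤ) : ℝ) ≤ ((N:ℤ) : ℝ) - 1 := by push_cast; nlinarith
    have h' : ((y N : ℤ) : ℝ) ≤ (((N:ℤ) - 1 : ℤ) : ℝ) := by push_cast; push_cast at this; linarith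
    exact_mod_cast h'
  exact ⟨hy1, hy2, by nlinarith, by nlinarith⟩



/-- `N^i (N-i)! / N! → 1` for fixed `i`. -/
lemma tendsto_fact_ratio (i : ℕ) :
    Tendsto (fun N : ℕ => (N:ℝ)^i * ((N - i).factorial : ℝ) / (N.factorial : ℝ))
      atTop (nhds 1) := by
  have hterm : ∀ k : ℕ, Tendsto (fun N : ℕ => (N:ℝ)/((N:ℝ) - k)) atTop (nhds 1) := by
    intro k
    have h1 : Tendsto (fun N : ℕ => 1 - (k:ℝ)*(1/(N:ℝ))) atTop (nhds (1 - (k:ℝ)*0)) :=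
      tendsto_const_nhds.sub ((tendsto_one_div_atTop_nhds_zero_nat).const_mul _)
    rw [mul_zero, sub_zero] at h1
    have h2 := h1.inv₀ (by norm_num)
    rw [inv_one] at h2
    refine h2.congr' ?_
    filter_upwards [eventually_gt_atTop k] with N hN
    have hN0 : (0:ℝ) < (N:ℝ) := by exact_mod_cast Nat.zero_lt_of_lt hN
    have hNk : (0:ℝ) < (N:ℝ) - k := by
      have : (k:ℝ) < (N:ℝ) := by exact_mod_cast hN
      linarith
    field_simp
  have hprod : Tendsto (fun N : ℕ => ∏ k ∈ Finset.range i, (N:ℝ)/((N:ℝ) - k)) atTop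
      (nhds 1) := by
    have := tendsto_finset_prod (f := fun (k : ℕ) (N : ℕ) => (N:ℝ)/((N:ℝ) - k))
      (a := fun _ => (1:ℝ)) (Finset.range i) (fun k _ => hterm k)
    simpa using this
  refine hprod.congr' ?_
  filter_upwards [eventually_ge_atTop i] with N hN
  have hds : ((N.descFactorial i : ℕ) : ℝ) = ∏ k ∈ Finset.range i, ((N:ℝ) - k) := by
    rw [Nat.descFactorial_eq_prod_range, Nat.cast_prod]
    exact Finset.prod_congr rfl fun k hk =>
      Nat.cast_sub (le_trans (Finset.mem_range.mp hk).le hN)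
  have hfact : (N.factorial : ℝ)
      = ((N - i).factorial : ℝ) * ∏ k ∈ Finset.range i, ((N:ℝ) - k) := by
    rw [← Nat.factorial_mul_descFactorial hN, Nat.cast_mul, hds]
  have hF : ((N - i).factorial : ℝ) ≠ 0 := Nat.cast_ne_zero.mpr (Nat.factorial_ne_zero _)
  have hPne : ∀ k ∈ Finset.range i, ((N:ℝ) - k) ≠ 0 := by
    intro k hk
    have : (k:ℝ) < (N:ℝ) := by
      exact_mod_cast lt_of_lt_of_le (Finset.mem_range.mp hk) hN
    linarith
  rw [hfact, Finset.prod_div_distrib, Finset.prod_const, Finset.card_range]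
  have hProd : (∏ k ∈ Finset.range i, ((N:ℝ) - k)) ≠ 0 := Finset.prod_ne_zero_iff.mpr hPne
  rw [div_eq_div_iff hProd (mul_ne_zero hF hProd)]
  ring

/-- counting lemma for the double if-product. -/
lemma prod_ite_const (n : ℕ) (C : ℝ) :
    ∏ i : Fin n, ∏ j : Fin n, (if i < j then C else 1)
      = C ^ (∑ i ∈ Finset.range n, i) := by
  have h1 : ∀ i : Fin n, ∏ j : Fin n, (if i < j then C else 1) = C ^ (n - 1 - i.1) := by
    intro i
    rw [← Finset.prod_filter, Finset.prod_const]
    congr 1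
    have : Finset.filter (fun j => i < j) Finset.univ = Finset.Ioi i := by
      ext j; simp
    rw [this, Fin.card_Ioi]
  rw [Finset.prod_congr rfl (fun i _ => h1 i), Finset.prod_pow_eq_pow_sum]
  congr 1
  rw [Fin.sum_univ_eq_sum_range (fun i => n - 1 - i)]
  exact Finset.sum_range_reflect (fun k => k) n



-- copies of earlier aux (will be merged)
lemma stirling_pos {m : ℕ} (hm : 0 < m) : 0 < Stirling.stirlingSeq m := by
  have hm' : (0:ℝ) < (m:ℝ) := by exact_mod_cast hm
  rw [Stirling.stirlingSeq]
  have h1 : (0:ℝ) < (m.factorial : ℝ) := by exact_mod_cast m.factorial_pos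
  have h2 : (0:ℝ) < Real.sqrt (2*m) * ((m:ℝ)/Real.exp 1)^m := by positivity
  exact div_pos h1 h2

lemma localCLT (y : ℕ → ℤ) (x : ℝ)
    (hx : Tendsto (fun N : ℕ => (2*((y N : ℤ) : ℝ) - N)/Real.sqrt N) atTop (nhds x)) :
    Tendsto (fun N : ℕ => (N.choose (y N).toNat : ℝ) / 2^N * Real.sqrt N) atTop
      (nhds (Real.sqrt (2/Real.pi) * Real.exp (-x^2/2))) := by
  set k : ℕ → ℕ := fun N => (y N).toNat with hkdef
  have hev := eventually_y_bounds hx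
  have hkc : ∀ᶠ N : ℕ in atTop, ((k N : ℕ) : ℝ) = ((y N : ℤ) : ℝ) := by
    filter_upwards [hev] with N h
    have h0 : ((y N).toNat : ℤ) = y N := Int.toNat_of_nonneg (by linarith [h.1])
    exact_mod_cast h0
  have hkle : ∀ᶠ N : ℕ in atTop, k N ≤ N := by
    filter_upwards [hev] with N h
    have := h.2.1
    simp only [hkdef]
    omega
  -- k and N - k tend to infinity
  have hq : Tendsto (fun N : ℕ => (N:ℝ)/4) atTop atTop :=
    tendsto_natCast_atTop_atTop.atTop_div_const (by norm_num)
  have hk_atTop : Tendsto (fun N => k N) atTop atTop := by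
    rw [← tendsto_natCast_atTop_iff (R := ℝ)]
    apply tendsto_atTop_mono' atTop ?_ hq
    filter_upwards [hev, hkc] with N h hc
    rw [hc]; exact h.2.2.1
  have hNk_atTop : Tendsto (fun N => N - k N) atTop atTop := by
    rw [← tendsto_natCast_atTop_iff (R := ℝ)]
    apply tendsto_atTop_mono' atTop ?_ hq
    filter_upwards [hev, hkc, hkle] with N h hc hle
    rw [Nat.cast_sub hle, hc]
    linarith [h.2.2.2]
  -- Stirling ratio limit
  have hπ : (0:ℝ) < Real.sqrt π := Real.sqrt_pos.mpr Real.pi_pos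
  have hsπ : Tendsto Stirling.stirlingSeq atTop (nhds (Real.sqrt π)) :=
    Stirling.tendsto_stirlingSeq_sqrt_pi
  have hSlim : Tendsto (fun N => Stirling.stirlingSeq N /
      (Stirling.stirlingSeq (k N) * Stirling.stirlingSeq (N - k N))) atTop
      (nhds (Real.sqrt π / (Real.sqrt π * Real.sqrt π))) :=
    hsπ.div ((hsπ.comp hk_atTop).mul (hsπ.comp hNk_atTop)) (by positivity)
  -- half ratios
  have hhalfy := tendsto_half hx
  have hhalf : Tendsto (fun N : ℕ => ((k N : ℕ):ℝ)/N) atTop (nhds (1/2)) := by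
    refine hhalfy.congr' ?_
    filter_upwards [hkc] with N hc
    rw [hc]
  have hhalf2 : Tendsto (fun N : ℕ => ((N:ℝ) - k N)/N) atTop (nhds (1/2)) := by
    have h0 : Tendsto (fun N : ℕ => 1 - ((k N : ℕ):ℝ)/N) atTop (nhds (1 - 1/2)) :=
      tendsto_const_nhds.sub hhalf
    norm_num at h0
    refine h0.congr' ?_
    filter_upwards [eventually_ge_atTop 1] with N h1
    have hN0 : (0:ℝ) < N := by exact_mod_cast h1
    field_simp
  -- eventual positivity facts
  have hposev : ∀ᶠ N : ℕ in atTop, (0:ℝ) < (k N : ℝ) ∧ (0:ℝ) < (N:ℝ) - k N ∧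
      (0:ℝ) < (N:ℝ) ∧ 1 ≤ k N ∧ 1 ≤ N - k N ∧ k N ≤ N := by
    filter_upwards [hev, hkc, hkle, eventually_ge_atTop 8] with N h hc hle h8
    have hN0 : (0:ℝ) < (N:ℝ) := by
      have : (8:ℝ) ≤ (N:ℝ) := by exact_mod_cast h8
      linarith
    have hk0 : (0:ℝ) < (k N : ℝ) := by rw [hc]; linarith [h.2.2.1]
    have hNk0 : (0:ℝ) < (N:ℝ) - k N := by rw [hc]; linarith [h.2.2.2]
    have hk1 : 1 ≤ k N := by
      by_contra hcon
      push_neg at hcon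
      interval_cases hk : k N
      · simp [hk] at hk0
    have hNk1 : 1 ≤ N - k N := by
      by_contra hcon
      push_neg at hcon
      have : k N = N := by omega
      rw [this] at hNk0
      simp at hNk0
    exact ⟨hk0, hNk0, hN0, hk1, hNk1, hle⟩
  -- QR limit
  have hQarg : Tendsto (fun N : ℕ => (N:ℝ)^2/(2*(((k N : ℕ):ℝ) * ((N:ℝ) - k N))))
      atTop (nhds 2) := by
    have hmul : Tendsto (fun N : ℕ => 2*(((k N : ℕ):ℝ)/N * (((N:ℝ) - k N)/N)))
        atTop (nhds (2*(1/2*(1/2)))) := (hhalf.mul hhalf2).const_mul 2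
    have hinv := hmul.inv₀ (by norm_num)
    have h2 : ((2:ℝ)*(1/2*(1/2)))⁻¹ = 2 := by norm_num
    rw [h2] at hinv
    refine hinv.congr' ?_
    filter_upwards [hposev] with N hp
    obtain ⟨hk0, hNk0, hN0, -, -, -⟩ := hp
    field_simp
  have hQR : Tendsto (fun N : ℕ =>
      Real.sqrt ((N:ℝ)^2/(2*(((k N : ℕ):ℝ) * ((N:ℝ) - k N))))) atTop
      (nhds (Real.sqrt 2)) := hQarg.sqrt
  -- the exponential part
  set a : ℕ → ℝ := fun N => (2*((k N : ℕ):ℝ) - N)/N with hadef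
  set x' : ℕ → ℝ := fun N => Real.sqrt N * a N with hx'def
  have hx' : Tendsto x' atTop (nhds x) := by
    refine hx.congr' ?_
    filter_upwards [hkc, eventually_ge_atTop 1] with N hc h1
    have hN0 : (0:ℝ) < N := by exact_mod_cast h1
    have hs0 : (0:ℝ) < Real.sqrt N := Real.sqrt_pos.mpr hN0
    have hss : Real.sqrt N * Real.sqrt N = (N:ℝ) := Real.mul_self_sqrt hN0.le
    simp only [hx'def, hadef, hc]
    rw [eq_comm, ← mul_div_assoc, div_eq_div_iff (ne_of_gt hN0) (ne_of_gt hs0)]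
    linear_combination (2*((y N : ℤ):ℝ) - N) * hss
  have ha0 : Tendsto a atTop (nhds 0) := by
    have h0 : Tendsto (fun N => x' N * (Real.sqrt N)⁻¹) atTop (nhds (x * 0)) :=
      hx'.mul inv_sqrtN_zero
    rw [mul_zero] at h0
    refine h0.congr' ?_
    filter_upwards [eventually_ge_atTop 1] with N h1
    have hN0 : (0:ℝ) < N := by exact_mod_cast h1
    have hs0 : (0:ℝ) < Real.sqrt N := Real.sqrt_pos.mpr hN0
    simp only [hx'def]
    field_simp
  -- the L identity and limit
  have hLlim : Tendsto (fun N : ℕ => (N:ℝ)*Real.log N - ((k N : ℕ):ℝ)*Real.log (k N)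
      - ((N:ℝ) - k N)*Real.log ((N:ℝ) - k N) - (N:ℝ)*Real.log 2) atTop
      (nhds (-x^2/2)) := by
    have t1 : Tendsto (fun N => -(x' N)^2/2) atTop (nhds (-x^2/2)) := by
      have := ((hx'.pow 2).neg).div_const 2
      simpa [neg_div] using this
    have t2 : Tendsto (fun N : ℕ =>
        ((N:ℝ)/2)*(((1+a N)*Real.log (1+a N) + (1-a N)*Real.log (1-a N)) - (a N)^2))
        atTop (nhds 0) := by
      apply squeeze_zero_norm' (a := fun N : ℕ => (7/2)*((x' N)^2*(a N)^2))
      · have habs : ∀ᶠ N : ℕ in atTop, |a N| ≤ 1/2 := by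
          have habs0 : Tendsto (fun N => |a N|) atTop (nhds 0) := by
            simpa using ha0.abs
          filter_upwards [habs0.eventually_lt_const (by norm_num : (0:ℝ) < 1/2)] with N h
          exact le_of_lt h
        filter_upwards [habs, eventually_ge_atTop 1] with N hab h1
        have hN0 : (0:ℝ) < N := by exact_mod_cast h1
        have hsq : (x' N)^2 = (N:ℝ)*(a N)^2 := by
          simp only [hx'def]
          rw [mul_pow, Real.sq_sqrt hN0.le]
        rw [Real.norm_eq_abs, abs_mul, abs_of_pos (by positivity : (0:ℝ) < (N:ℝ)/2)]
        calc (N:ℝ)/2 * |(1+a N)*Real.log (1+a N) + (1-a N)*Real.log (1-a N) - (a N)^2|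
            ≤ (N:ℝ)/2 * (7*(a N)^4) := by
              gcongr
              exact g_approx hab
          _ = (7/2)*((x' N)^2*(a N)^2) := by rw [hsq]; ring
      · have h0 : Tendsto (fun N => (7/2)*((x' N)^2*(a N)^2)) atTop
            (nhds ((7/2)*(x^2*0^2))) := ((hx'.pow 2).mul (ha0.pow 2)).const_mul _
        norm_num at h0
        exact h0
    have hcomb := t1.sub t2
    rw [sub_zero] at hcomb
    refine hcomb.congr' ?_
    filter_upwards [hposev] with N hp
    obtain ⟨hk0, hNk0, hN0, -, -, -⟩ := hp
    have h1a : 1 + a N = 2*((k N : ℕ):ℝ)/N := by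
      simp only [hadef]; field_simp; ring
    have h2a : 1 - a N = 2*((N:ℝ) - k N)/N := by
      simp only [hadef]; field_simp; ring
    have h1a0 : (0:ℝ) < 1 + a N := by rw [h1a]; positivity
    have h2a0 : (0:ℝ) < 1 - a N := by rw [h2a]; positivity
    have hka : ((k N : ℕ):ℝ) = N/2*(1 + a N) := by rw [h1a]; field_simp
    have hNka : (N:ℝ) - k N = N/2*(1 - a N) := by rw [h2a]; field_simp
    have hN2 : (0:ℝ) < (N:ℝ)/2 := by positivity
    have hlogk : Real.log ((k N : ℕ):ℝ) = Real.log ((N:ℝ)/2) + Real.log (1 + a N) := by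
      rw [hka, Real.log_mul (ne_of_gt hN2) (ne_of_gt h1a0)]
    have hlogNk : Real.log ((N:ℝ) - k N) = Real.log ((N:ℝ)/2) + Real.log (1 - a N) := by
      rw [hNka, Real.log_mul (ne_of_gt hN2) (ne_of_gt h2a0)]
    have hlogN2 : Real.log ((N:ℝ)/2) = Real.log N - Real.log 2 :=
      Real.log_div (ne_of_gt hN0) two_ne_zero
    have hsq : (x' N)^2 = (N:ℝ)*(a N)^2 := by
      simp only [hx'def]
      rw [mul_pow, Real.sq_sqrt hN0.le]
    rw [eq_comm, hlogk, hlogNk, hlogN2, hNka, hka, hsq]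
    ring
  have hexpL : Tendsto (fun N : ℕ => Real.exp ((N:ℝ)*Real.log N
      - ((k N : ℕ):ℝ)*Real.log (k N)
      - ((N:ℝ) - k N)*Real.log ((N:ℝ) - k N) - (N:ℝ)*Real.log 2)) atTop
      (nhds (Real.exp (-x^2/2))) :=
    (Real.continuous_exp.tendsto _).comp hLlim
  -- combine
  have hfinal := (hSlim.mul hQR).mul hexpL
  have hval : Real.sqrt π / (Real.sqrt π * Real.sqrt π) * Real.sqrt 2
      * Real.exp (-x^2/2) = Real.sqrt (2/π) * Real.exp (-x^2/2) := by
    have hpp : Real.sqrt π * Real.sqrt π = π := Real.mul_self_sqrt Real.pi_pos.le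
    rw [Real.sqrt_div (by norm_num : (0:ℝ) ≤ 2)]
    field_simp
  rw [hval] at hfinal
  refine hfinal.congr' ?_
  filter_upwards [hposev, hkc] with N hp hc
  obtain ⟨hk0, hNk0, hN0, hk1, hNk1, hle⟩ := hp
  have hcast : ((N - k N : ℕ):ℝ) = (N:ℝ) - k N := by
    push_cast [Nat.cast_sub hle]
    ring
  have hfact : ∀ m : ℕ, 1 ≤ m → (m.factorial : ℝ)
      = Stirling.stirlingSeq m * (Real.sqrt (2*(m:ℝ)) * ((m:ℝ)/Real.exp 1)^m) := by
    intro m hm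
    have hm0 : (0:ℝ) < (m:ℝ) := by exact_mod_cast hm
    have hden : Real.sqrt (2*(m:ℝ)) * ((m:ℝ)/Real.exp 1)^m ≠ 0 := by positivity
    rw [Stirling.stirlingSeq, div_mul_cancel₀ _ hden]
  have hpowm : ∀ m : ℕ, 1 ≤ m → ((m:ℝ)/Real.exp 1)^m
      = Real.exp ((m:ℝ)*Real.log m - m) := by
    intro m hm
    have hm0 : (0:ℝ) < (m:ℝ) := by exact_mod_cast hm
    have hdiv : (m:ℝ)/Real.exp 1 = Real.exp (Real.log m - 1) := by
      rw [Real.exp_sub, Real.exp_log hm0]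
    rw [hdiv, ← Real.exp_nat_mul]
    congr 1
    ring
  have h2N : (2:ℝ)^N = Real.exp ((N:ℝ)*Real.log 2) := by
    rw [Real.exp_nat_mul, Real.exp_log (by norm_num : (0:ℝ) < 2)]
  have hN1 : 1 ≤ N := by
    have : 0 < N := by exact_mod_cast hN0
    omega
  have hchoose : (N.choose (k N) : ℝ)
      = (N.factorial : ℝ)/((k N).factorial * (N - k N).factorial) := by
    rw [Nat.cast_choose ℝ hle]
  have hsqrtQ : Real.sqrt (2*(N:ℝ)) * Real.sqrt N
      / (Real.sqrt (2*((k N : ℕ):ℝ)) * Real.sqrt (2*((N:ℝ) - k N)))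
      = Real.sqrt ((N:ℝ)^2/(2*(((k N : ℕ):ℝ) * ((N:ℝ) - k N)))) := by
    rw [← Real.sqrt_mul (by positivity), ← Real.sqrt_mul (by positivity),
      ← Real.sqrt_div (by positivity)]
    congr 1
    field_simp
  have hexpRatio : Real.exp ((N:ℝ)*Real.log N - N)
      / (Real.exp (((k N : ℕ):ℝ)*Real.log (k N) - k N)
        * Real.exp (((N:ℝ) - k N)*Real.log ((N:ℝ) - k N) - ((N:ℝ) - k N))
        * Real.exp ((N:ℝ)*Real.log 2))
      = Real.exp ((N:ℝ)*Real.log N - ((k N : ℕ):ℝ)*Real.log (k N)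
        - ((N:ℝ) - k N)*Real.log ((N:ℝ) - k N) - (N:ℝ)*Real.log 2) := by
    rw [← Real.exp_add, ← Real.exp_add, ← Real.exp_sub]
    congr 1
    ring
  -- assemble everything
  rw [hchoose, hfact N hN1, hfact (k N) hk1, hfact (N - k N) hNk1,
    hpowm N hN1, hpowm (k N) hk1, hpowm (N - k N) hNk1, h2N, hcast,
    ← hsqrtQ, ← hexpRatio]
  have hsA : (0:ℝ) < Stirling.stirlingSeq (k N) := stirling_pos (by omega)
  have hsB : (0:ℝ) < Stirling.stirlingSeq (N - k N) := stirling_pos (by omega)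
  have hsq1 : (0:ℝ) < Real.sqrt (2*((k N : ℕ):ℝ)) := Real.sqrt_pos.mpr (by positivity)
  have hsq2 : (0:ℝ) < Real.sqrt (2*((N:ℝ) - k N)) := Real.sqrt_pos.mpr (by positivity)
  have hsq3 : (0:ℝ) < Real.sqrt (2*(N:ℝ)) := Real.sqrt_pos.mpr (by positivity)
  have he1 := Real.exp_ne_zero (((k N : ℕ):ℝ)*Real.log (k N) - k N)
  have he2 := Real.exp_ne_zero (((N:ℝ) - k N)*Real.log ((N:ℝ) - k N) - ((N:ℝ) - k N))
  have he3 := Real.exp_ne_zero ((N:ℝ)*Real.log 2)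
  field_simp



lemma main_aux (m : ℕ) (w : Fin (m+1) → ℝ) (A : ℕ → ℕ)
    (hA : ∀ᶠ N : ℕ in atTop, A N = 0) :
    Tendsto (fun N : ℕ =>
      ((N:ℝ)/4) ^ ((((m+1) * (m+1+1) : ℕ) : ℝ)/4) *
      ((∏ i ∈ Finset.range (m+1), ((N - i).factorial : ℝ)) /
        (∏ i : Fin (m+1),
          ((((⌊(w i * Real.sqrt N + N)/2⌋ : ℤ).toNat.factorial *
            ((N : ℤ) - ⌊(w i * Real.sqrt N + N)/2⌋).toNat.factorial : ℕ)) : ℝ))) *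
      (∏ i : Fin (m+1), ∏ j : Fin (m+1), if i < j then
          (((⌊(w i * Real.sqrt N + N)/2⌋ : ℤ) : ℝ)
            - ((⌊(w j * Real.sqrt N + N)/2⌋ : ℤ) : ℝ)) else 1) *
      ((2:ℝ) ^ (N + (N - (m+1)) * m + A N))⁻¹) atTop
      (nhds ((2 * Real.pi) ^ (-((m+1 : ℕ) : ℝ)/2) *
        (∏ i : Fin (m+1), ∏ j : Fin (m+1), if i < j then (w i - w j) else 1) *
        Real.exp (-(1/2) * ∑ i : Fin (m+1), (w i)^2))) := by
  -- notation
  set Y : ℕ → Fin (m+1) → ℤ := fun N i => ⌊(w i * Real.sqrt N + N)/2⌋ with hYdef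
  set T : ℕ := ∑ i ∈ Finset.range (m+1), i with hTdef
  have h2T : T * 2 = (m+1) * m := by
    have := Finset.sum_range_id_mul_two (m+1)
    simpa using this
  -- limits of components
  have hxlim : ∀ i : Fin (m+1), Tendsto
      (fun N : ℕ => (2*((Y N i : ℤ) : ℝ) - N)/Real.sqrt N) atTop (nhds (w i)) :=
    fun i => tendsto_floor_scaled (w i)
  have hevB : ∀ᶠ N : ℕ in atTop, ∀ i : Fin (m+1),
      1 ≤ Y N i ∧ Y N i ≤ (N:ℤ) - 1 := by
    refine eventually_all.mpr fun i => ?_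
    filter_upwards [eventually_y_bounds (hxlim i)] with N h
    exact ⟨h.1, h.2.1⟩
  have hc : ∀ i : Fin (m+1), Tendsto
      (fun N : ℕ => (N.choose (Y N i).toNat : ℝ) / 2^N * Real.sqrt N) atTop
      (nhds (Real.sqrt (2/Real.pi) * Real.exp (-(w i)^2/2))) :=
    fun i => localCLT _ _ (hxlim i)
  have hprodc : Tendsto
      (fun N : ℕ => ∏ i : Fin (m+1), ((N.choose (Y N i).toNat : ℝ) / 2^N * Real.sqrt N))
      atTop (nhds (∏ i : Fin (m+1), Real.sqrt (2/Real.pi) * Real.exp (-(w i)^2/2))) :=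
    tendsto_finset_prod _ (fun i _ => hc i)
  have hprodv : Tendsto
      (fun N : ℕ => ∏ i : Fin (m+1), ∏ j : Fin (m+1),
        if i < j then ((Y N i : ℝ) - (Y N j : ℝ)) * (2/Real.sqrt N) else 1)
      atTop (nhds (∏ i : Fin (m+1), ∏ j : Fin (m+1),
        if i < j then (w i - w j) else 1)) := by
    apply tendsto_finset_prod
    intro i _
    apply tendsto_finset_prod
    intro j _
    by_cases hij : i < j
    · simp only [hij, if_true]
      exact tendsto_floor_diff_scaled (w i) (w j)
    · simp only [hij, if_false]
      exact tendsto_const_nhds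
  have hprode : Tendsto
      (fun N : ℕ => ∏ i ∈ Finset.range (m+1),
        ((N:ℝ)^i * ((N - i).factorial : ℝ) / (N.factorial : ℝ)))
      atTop (nhds 1) := by
    have := tendsto_finset_prod (f := fun (i : ℕ) (N : ℕ) =>
      (N:ℝ)^i * ((N - i).factorial : ℝ) / (N.factorial : ℝ))
      (a := fun _ => (1:ℝ)) (Finset.range (m+1)) (fun i _ => tendsto_fact_ratio i)
    simpa using this
  -- combined limit
  have hG : Tendsto (fun N : ℕ =>
      (∏ i : Fin (m+1), ((N.choose (Y N i).toNat : ℝ) / 2^N * Real.sqrt N)) *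
      (∏ i : Fin (m+1), ∏ j : Fin (m+1),
        if i < j then ((Y N i : ℝ) - (Y N j : ℝ)) * (2/Real.sqrt N) else 1) *
      (∏ i ∈ Finset.range (m+1),
        ((N:ℝ)^i * ((N - i).factorial : ℝ) / (N.factorial : ℝ))) *
      ((2:ℝ)^(m+1))⁻¹) atTop
      (nhds ((∏ i : Fin (m+1), Real.sqrt (2/Real.pi) * Real.exp (-(w i)^2/2)) *
        (∏ i : Fin (m+1), ∏ j : Fin (m+1), if i < j then (w i - w j) else 1) *
        1 * ((2:ℝ)^(m+1))⁻¹)) :=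
    ((hprodc.mul hprodv).mul hprode).mul tendsto_const_nhds
  -- identify the limit value
  have hlimval : (∏ i : Fin (m+1), Real.sqrt (2/Real.pi) * Real.exp (-(w i)^2/2)) *
      (∏ i : Fin (m+1), ∏ j : Fin (m+1), if i < j then (w i - w j) else 1) *
      1 * ((2:ℝ)^(m+1))⁻¹
      = (2 * Real.pi) ^ (-((m+1 : ℕ) : ℝ)/2) *
        (∏ i : Fin (m+1), ∏ j : Fin (m+1), if i < j then (w i - w j) else 1) *
        Real.exp (-(1/2) * ∑ i : Fin (m+1), (w i)^2) := by
    have hsum : ∑ i : Fin (m+1), (-(w i)^2/2) = -(1/2) * ∑ i : Fin (m+1), (w i)^2 := by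
      rw [Finset.mul_sum]
      exact Finset.sum_congr rfl (fun i _ => by ring)
    rw [Finset.prod_mul_distrib, Finset.prod_const, Finset.card_univ, Fintype.card_fin,
      ← Real.exp_sum, hsum]
    have hstep : Real.sqrt (2/Real.pi) * ((2:ℝ))⁻¹ = (2*Real.pi) ^ (-(1:ℝ)/2) := by
      have hpi : (0:ℝ) < Real.pi := Real.pi_pos
      have h1 : (2*Real.pi) ^ (-(1:ℝ)/2) = (Real.sqrt (2*Real.pi))⁻¹ := by
        rw [show (-(1:ℝ)/2) = -((1:ℝ)/2) by ring, Real.rpow_neg (by positivity),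
          ← Real.sqrt_eq_rpow]
      rw [h1, Real.sqrt_div (by norm_num : (0:ℝ) ≤ 2),
        Real.sqrt_mul (by norm_num : (0:ℝ) ≤ 2)]
      have h2 : Real.sqrt 2 * Real.sqrt 2 = 2 := Real.mul_self_sqrt (by norm_num)
      have hs2 : (0:ℝ) < Real.sqrt 2 := Real.sqrt_pos.mpr (by norm_num)
      have hsp : (0:ℝ) < Real.sqrt Real.pi := Real.sqrt_pos.mpr hpi
      field_simp
      linear_combination h2
    have hconst : Real.sqrt (2/Real.pi)^(m+1) * ((2:ℝ)^(m+1))⁻¹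
        = (2 * Real.pi) ^ (-((m+1 : ℕ) : ℝ)/2) := by
      rw [← inv_pow, ← mul_pow, hstep]
      rw [← Real.rpow_natCast ((2*Real.pi) ^ (-(1:ℝ)/2)) (m+1),
        ← Real.rpow_mul (by positivity : (0:ℝ) ≤ 2*Real.pi)]
      congr 1
      push_cast
      ring
    rw [← hconst]
    ring
  rw [hlimval] at hG
  -- eventual equality
  refine hG.congr' ?_
  filter_upwards [hA, hevB, eventually_ge_atTop (m+1)] with N hA0 hbnd hNm
  obtain ⟨d, hd⟩ : ∃ d, N = (m+1)+d := ⟨N-(m+1), by omega⟩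
  have hN1 : 1 ≤ N := by omega
  have hNR : (0:ℝ) < (N:ℝ) := by exact_mod_cast hN1
  have hs0 : (0:ℝ) < Real.sqrt N := Real.sqrt_pos.mpr hNR
  have hss : Real.sqrt N * Real.sqrt N = (N:ℝ) := Real.mul_self_sqrt hNR.le
  -- replace A N by 0
  rw [hA0, add_zero]
  have h2T' : (T:ℤ) * 2 = ((m:ℤ)+1) * m := by exact_mod_cast h2T
  -- basic facts about the lattice points
  have hk : ∀ i : Fin (m+1), ((Y N i).toNat : ℝ) = ((Y N i : ℤ) : ℝ) ∧
      (Y N i).toNat ≤ N ∧ 1 ≤ (Y N i).toNat ∧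
      ((N:ℤ) - Y N i).toNat = N - (Y N i).toNat := by
    intro i
    obtain ⟨h1, h2⟩ := hbnd i
    have hc : ((Y N i).toNat : ℤ) = Y N i := Int.toNat_of_nonneg (by omega)
    refine ⟨by exact_mod_cast hc, by omega, by omega, by omega⟩
  -- denominator product
  have hBterm : ∀ i : Fin (m+1),
      (((Y N i).toNat.factorial * ((N:ℤ) - Y N i).toNat.factorial : ℕ) : ℝ)
      = (N.factorial : ℝ) / (N.choose ((Y N i).toNat) : ℝ) := by
    intro i
    obtain ⟨hc, hle, h1, hsub⟩ := hk i
    have hpos : 0 < N.choose ((Y N i).toNat) := Nat.choose_pos hle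
    have hposR : (N.choose ((Y N i).toNat) : ℝ) ≠ 0 := by exact_mod_cast hpos.ne'
    rw [hsub, eq_div_iff hposR]
    have hid := Nat.choose_mul_factorial_mul_factorial hle
    push_cast
    have : (Y N i).toNat.factorial * (N - (Y N i).toNat).factorial
        * N.choose ((Y N i).toNat) = N.factorial := by rw [← hid]; ring
    exact_mod_cast this
  have hBprod : (∏ i : Fin (m+1),
      (((Y N i).toNat.factorial * ((N:ℤ) - Y N i).toNat.factorial : ℕ) : ℝ))
      = (N.factorial : ℝ)^(m+1)
        / (∏ i : Fin (m+1), (N.choose ((Y N i).toNat) : ℝ)) := by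
    rw [Finset.prod_congr rfl (fun i _ => hBterm i), Finset.prod_div_distrib,
      Finset.prod_const, Finset.card_univ, Fintype.card_fin]
  have hCprod : (∏ i : Fin (m+1), (N.choose ((Y N i).toNat) : ℝ))
      = (∏ i : Fin (m+1), ((N.choose (Y N i).toNat : ℝ) / 2^N * Real.sqrt N))
        * ((2:ℝ)^N / Real.sqrt N)^(m+1) := by
    rw [show ((2:ℝ)^N / Real.sqrt N)^(m+1)
        = ∏ _i : Fin (m+1), ((2:ℝ)^N / Real.sqrt N) by
      rw [Finset.prod_const, Finset.card_univ, Fintype.card_fin],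
      ← Finset.prod_mul_distrib]
    refine Finset.prod_congr rfl fun i _ => ?_
    field_simp
  -- numerator product
  have hAterm : ∀ i ∈ Finset.range (m+1), ((N - i).factorial : ℝ)
      = ((N:ℝ)^i * ((N - i).factorial : ℝ) / (N.factorial : ℝ))
        * ((N.factorial : ℝ) / (N:ℝ)^i) := by
    intro i _
    have hNf : (N.factorial : ℝ) ≠ 0 := Nat.cast_ne_zero.mpr N.factorial_ne_zero
    have hNi : (N:ℝ)^i ≠ 0 := by positivity
    field_simp
  have hAprod : (∏ i ∈ Finset.range (m+1), ((N - i).factorial : ℝ))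
      = (∏ i ∈ Finset.range (m+1),
          ((N:ℝ)^i * ((N - i).factorial : ℝ) / (N.factorial : ℝ)))
        * ((N.factorial : ℝ)^(m+1) / (N:ℝ)^T) := by
    rw [Finset.prod_congr rfl hAterm, Finset.prod_mul_distrib]
    congr 1
    rw [Finset.prod_div_distrib, Finset.prod_const, Finset.card_range,
      Finset.prod_pow_eq_pow_sum, ← hTdef]
  -- Vandermonde product
  have hVterm : ∀ i j : Fin (m+1),
      (if i < j then ((Y N i : ℝ) - (Y N j : ℝ)) else 1)
      = (if i < j then ((Y N i : ℝ) - (Y N j : ℝ)) * (2/Real.sqrt N) else 1)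
        * (if i < j then (Real.sqrt N/2) else 1) := by
    intro i j
    by_cases hij : i < j
    · simp only [hij, if_true]
      field_simp
    · simp [hij]
  have hVprod : (∏ i : Fin (m+1), ∏ j : Fin (m+1),
        if i < j then ((Y N i : ℝ) - (Y N j : ℝ)) else 1)
      = (∏ i : Fin (m+1), ∏ j : Fin (m+1),
          if i < j then ((Y N i : ℝ) - (Y N j : ℝ)) * (2/Real.sqrt N) else 1)
        * (Real.sqrt N/2)^T := by
    calc (∏ i : Fin (m+1), ∏ j : Fin (m+1),
        if i < j then ((Y N i : ℝ) - (Y N j : ℝ)) else 1)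
        = ∏ i : Fin (m+1), ∏ j : Fin (m+1),
          ((if i < j then ((Y N i : ℝ) - (Y N j : ℝ)) * (2/Real.sqrt N) else 1)
            * (if i < j then (Real.sqrt N/2) else 1)) := by
          exact Finset.prod_congr rfl fun i _ =>
            Finset.prod_congr rfl fun j _ => hVterm i j
      _ = (∏ i : Fin (m+1), ∏ j : Fin (m+1),
          if i < j then ((Y N i : ℝ) - (Y N j : ℝ)) * (2/Real.sqrt N) else 1)
          * (∏ i : Fin (m+1), ∏ j : Fin (m+1),
            if i < j then (Real.sqrt N/2) else 1) := by
          rw [← Finset.prod_mul_distrib]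
          exact Finset.prod_congr rfl fun i _ => Finset.prod_mul_distrib
      _ = _ := by rw [prod_ite_const (m+1) (Real.sqrt N/2), ← hTdef]
  -- the rpow factor
  have hTm : (m+1) * (m+1+1) = 2*(T+(m+1)) := by
    zify
    linear_combination -h2T'
  have hR : ((N:ℝ)/4) ^ ((((m+1) * (m+1+1) : ℕ) : ℝ)/4) = (Real.sqrt N/2)^(T+(m+1)) := by
    have h4 : (N:ℝ)/4 = (Real.sqrt N/2)^2 := by
      rw [div_pow, Real.sq_sqrt hNR.le]
      norm_num
    rw [h4, ← Real.rpow_natCast (Real.sqrt N/2) 2,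
      ← Real.rpow_mul (by positivity : (0:ℝ) ≤ Real.sqrt N/2),
      ← Real.rpow_natCast (Real.sqrt N/2) (T+(m+1))]
    congr 1
    have hcast2 : (((m+1) * (m+1+1) : ℕ) : ℝ) = ((2*(T+(m+1)) : ℕ) : ℝ) := by
      exact_mod_cast congrArg (Nat.cast : ℕ → ℝ) hTm
    rw [hcast2]
    push_cast
    ring
  -- the power-of-two bookkeeping
  have hnat : N*(m+1) = N + (N-(m+1))*m + (T+T) := by
    have h1 : N - (m+1) = d := by omega
    rw [h1, hd]
    zify
    linear_combination -h2T'
  have hexp2 : ((2:ℝ)^N)^(m+1) = (2:ℝ)^(N + (N-(m+1))*m) * (2:ℝ)^(T+T) := by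
    rw [← pow_mul, ← pow_add, ← hnat]
  have hNT : (N:ℝ)^T = Real.sqrt N^(T+T) := by
    rw [pow_add, ← mul_pow, hss]
  -- nonzero facts
  have hNf : (N.factorial : ℝ) ≠ 0 := Nat.cast_ne_zero.mpr N.factorial_ne_zero
  have hs0' : Real.sqrt N ≠ 0 := ne_of_gt hs0
  have h2N0 : ((2:ℝ)^N) ≠ 0 := by positivity
  -- final assembly
  rw [hBprod, hCprod, hAprod, hVprod, hR, div_pow ((2:ℝ)^N) (Real.sqrt N) (m+1), hexp2, hNT]
  field_simp
  ring_nf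
  have e2 : ((1:ℝ)/2)^(T*2) * ((1:ℝ)/2)^m * 2^(T*2) * 2^m = 1 := by
    rw [show ((1:ℝ)/2)^(T*2) * ((1:ℝ)/2)^m * 2^(T*2) * 2^m
      = (((1:ℝ)/2)^(T*2) * 2^(T*2)) * (((1:ℝ)/2)^m * 2^m) by ring, ← mul_pow, ← mul_pow]
    norm_num
  rw [mul_assoc _ (((1:ℝ)/2)^(T*2)), mul_assoc _ (((1:ℝ)/2)^(T*2) * _),
    mul_assoc _ (((1:ℝ)/2)^(T*2) * _ * _), e2, mul_one]
  simp only [mul_comm, mul_left_comm, mul_assoc]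


end Stmt7Aux
end Stmt7AuxSec

/-- Fix `n ≥ 1` and strictly interlacing reals `z_i^{(j)}`
(`j = 1,…,n`, `i = 1,…,j`).  With `y_i^{(j)}(N) = ⌊(z_i^{(j)}√N + N)/2⌋` and
`P_N = [∏_{i=0}^{n-1}(N-i)! / ∏_{i=1}^n y_i^{(n)}!(N-y_i^{(n)})!] ⬝ Δ(y^{(n)}) ⬝
2^{-N-(N-n)(n-1)-α(y^{(1)},…,y^{(n-1)})}`, one has
`(N/4)^{n(n+1)/4} P_N → (2π)^{-n/2} Δ(z^{(n)}) exp(-½∑ᵢ (z_i^{(n)})²)` as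
`N → ∞`, the joint density of the GUE* minor process. -/
theorem stmt_7 (n : ℕ) (hn : 1 ≤ n)
    (z : (j : Fin n) → Fin (j.1 + 1) → ℝ)
    (hinter : ∀ j : Fin n, ∀ h : j.1 + 1 < n, ∀ i : Fin (j.1 + 1),
      z j i < z ⟨j.1 + 1, h⟩ i.castSucc ∧ z ⟨j.1 + 1, h⟩ i.succ < z j i) :
    Filter.Tendsto (fun N : ℕ =>
      ((N : ℝ) / 4) ^ (((n * (n + 1) : ℕ) : ℝ) / 4) *
      ((∏ i ∈ Finset.range n, (Nat.factorial (N - i) : ℝ)) /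
        (∏ i : Fin ((n - 1) + 1),
          (((aztecY n z N ⟨n - 1, by omega⟩ i).toNat.factorial *
            ((N : ℤ) - aztecY n z N ⟨n - 1, by omega⟩ i).toNat.factorial : ℕ) : ℝ))) *
      (∏ i : Fin ((n - 1) + 1), ∏ j : Fin ((n - 1) + 1), if i < j then
          ((aztecY n z N ⟨n - 1, by omega⟩ i : ℝ) -
            (aztecY n z N ⟨n - 1, by omega⟩ j : ℝ)) else 1) *
      ((2 : ℝ) ^ (N + (N - n) * (n - 1) + aztecAlphaY n z N))⁻¹)
      Filter.atTop
      (nhds ((2 * Real.pi) ^ (-(n : ℝ) / 2) *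
        (∏ i : Fin ((n - 1) + 1), ∏ j : Fin ((n - 1) + 1), if i < j then
          (z ⟨n - 1, by omega⟩ i - z ⟨n - 1, by omega⟩ j) else 1) *
        Real.exp (-(1 / 2) * ∑ i : Fin ((n - 1) + 1), (z ⟨n - 1, by omega⟩ i) ^ 2))) := by
  obtain ⟨m, rfl⟩ : ∃ m, n = m + 1 := ⟨n - 1, by omega⟩
  have halpha : ∀ᶠ N : ℕ in Filter.atTop, aztecAlphaY (m+1) z N = 0 := by
    have key : ∀ (j : Fin (m+1)) (h : j.1 + 1 < m+1) (i : Fin (j.1 + 1)),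
        ∀ᶠ N : ℕ in Filter.atTop,
          aztecY (m+1) z N j i ≠ aztecY (m+1) z N ⟨j.1 + 1, h⟩ i.castSucc ∧
          aztecY (m+1) z N j i ≠ aztecY (m+1) z N ⟨j.1 + 1, h⟩ i.succ := by
      intro j h i
      obtain ⟨h1, h2⟩ := hinter j h i
      filter_upwards [Stmt7Aux.eventually_floor_lt h1, Stmt7Aux.eventually_floor_lt h2] with N f1 f2
      exact ⟨ne_of_lt f1, ne_of_gt f2⟩
    have big : ∀ᶠ N : ℕ in Filter.atTop, ∀ (j : Fin (m+1)) (i : Fin (j.1 + 1)),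
        ∀ h : j.1 + 1 < m+1,
          aztecY (m+1) z N j i ≠ aztecY (m+1) z N ⟨j.1 + 1, h⟩ i.castSucc ∧
          aztecY (m+1) z N j i ≠ aztecY (m+1) z N ⟨j.1 + 1, h⟩ i.succ := by
      refine Filter.eventually_all.mpr fun j => ?_
      refine Filter.eventually_all.mpr fun i => ?_
      by_cases hc : j.1 + 1 < m+1
      · filter_upwards [key j hc i] with N hN
        intro h
        exact hN
      · exact Filter.Eventually.of_forall fun N h => absurd h hc
    filter_upwards [big] with N hbig
    unfold aztecAlphaY
    apply Finset.sum_eq_zero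
    intro j _
    split_ifs with h
    · rw [Finset.card_eq_zero, Finset.filter_eq_empty_iff]
      intro i _
      rintro (heq | heq)
      · exact (hbig j i h).1 heq
      · exact (hbig j i h).2 heq
    · rfl
  exact Stmt7Aux.main_aux m (fun i => z ⟨m, Nat.lt_succ_self m⟩ i) (aztecAlphaY (m+1) z) halpha
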